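/- Let T be a 2×2 complex matrix with entries t₁₁, t₁₂, t₂₁, t₂₂, and let N₁, N₂ be nonzero real numbers. Suppose N₁ = |t₁₁|² N₁ + |t₂₁|² N₂, N₂ = |t₁₂|² N₁ + |t₂₂|² N₂, 0 = conj(t₁₁) t₁₂ N₁ + conj(t₂₁) t₂₂ N₂, t₂₂ ≠ 0, and det T = 1. Then t₂₂ = conj(t₁₁) and t₂₁ = −(N₁/N₂) · conj(t₁₂); moreover, if in addition N₁ = N₂, then T is unitary (T · Tᴴ = 1, where Tᴴ is the conjugate transpose). -/

import Mathlib

/-- Canonical form of the transition matrix: with `det T = 1` the flux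
conservation relations force `t₂₂ = conj t₁₁`, `t₂₁ = −(N₁/N₂) conj t₁₂`, and
for `N₁ = N₂` the matrix is unitary. -/
theorem transition_matrix_canonical_form
    (t₁₁ t₁₂ t₂₁ t₂₂ : ℂ) (N₁ N₂ : ℝ) (hN₁ : N₁ ≠ 0) (hN₂ : N₂ ≠ 0)
    (h1 : N₁ = ‖t₁₁‖ ^ 2 * N₁ + ‖t₂₁‖ ^ 2 * N₂)
    (h2 : N₂ = ‖t₁₂‖ ^ 2 * N₁ + ‖t₂₂‖ ^ 2 * N₂)
    (h3 : 0 = (starRingEnd ℂ) t₁₁ * t₁₂ * (N₁ : ℂ) + (starRingEnd ℂ) t₂₁ * t₂₂ * (N₂ : ℂ))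
    (ht : t₂₂ ≠ 0)
    (hdet : Matrix.det !![t₁₁, t₁₂; t₂₁, t₂₂] = 1) :
    t₂₂ = (starRingEnd ℂ) t₁₁ ∧
    t₂₁ = -((N₁ : ℂ) / (N₂ : ℂ)) * (starRingEnd ℂ) t₁₂ ∧
    (N₁ = N₂ →
      !![t₁₁, t₁₂; t₂₁, t₂₂] * (!![t₁₁, t₁₂; t₂₁, t₂₂]).conjTranspose = 1) := by
  have hN₂c : (N₂ : ℂ) ≠ 0 := by exact_mod_cast hN₂
  have hdet' : t₁₁ * t₂₂ - t₁₂ * t₂₁ = 1 := by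
    simpa [Matrix.det_fin_two_of] using hdet
  have habs : ∀ z : ℂ, ((‖z‖ ^ 2 : ℝ) : ℂ) = (starRingEnd ℂ) z * z := by
    intro z
    rw [Complex.sq_norm]
    exact Complex.normSq_eq_conj_mul_self
  have h2c : (N₂ : ℂ) = (starRingEnd ℂ) t₁₂ * t₁₂ * N₁ + (starRingEnd ℂ) t₂₂ * t₂₂ * N₂ := by
    have h := congrArg (Complex.ofReal) h2
    rw [Complex.ofReal_add, Complex.ofReal_mul, Complex.ofReal_mul, habs, habs] at h
    exact h
  have h3' : t₂₁ * (starRingEnd ℂ) t₂₂ * (N₂ : ℂ) + t₁₁ * (starRingEnd ℂ) t₁₂ * (N₁ : ℂ) = 0 := by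
    have h := congrArg (starRingEnd ℂ) h3
    simp only [map_add, map_mul, map_zero, Complex.conj_conj, Complex.conj_ofReal] at h
    linear_combination -h
  have h11 : t₁₁ = (starRingEnd ℂ) t₂₂ := by
    have key : t₁₁ * (N₂ : ℂ) = (starRingEnd ℂ) t₂₂ * (N₂ : ℂ) := by
      linear_combination t₁₁ * h2c + t₁₂ * h3' + ((starRingEnd ℂ) t₂₂ * (N₂ : ℂ)) * hdet'
    exact mul_right_cancel₀ hN₂c key
  have ht' : (starRingEnd ℂ) t₂₂ ≠ 0 := by simpa using ht
  have hdiv : (N₁ : ℂ) / (N₂ : ℂ) * (N₂ : ℂ) = (N₁ : ℂ) := div_mul_cancel₀ _ hN₂c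
  have h21 : t₂₁ = -((N₁ : ℂ) / (N₂ : ℂ)) * (starRingEnd ℂ) t₁₂ := by
    have key : t₂₁ * (starRingEnd ℂ) t₂₂ * (N₂ : ℂ) =
        (-((N₁ : ℂ) / (N₂ : ℂ)) * (starRingEnd ℂ) t₁₂) * (starRingEnd ℂ) t₂₂ * (N₂ : ℂ) := by
      linear_combination h3' - (starRingEnd ℂ) t₁₂ * (N₁ : ℂ) * h11 +
        (starRingEnd ℂ) t₁₂ * (starRingEnd ℂ) t₂₂ * hdiv
    have k1 : t₂₁ * (starRingEnd ℂ) t₂₂ =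
        (-((N₁ : ℂ) / (N₂ : ℂ)) * (starRingEnd ℂ) t₁₂) * (starRingEnd ℂ) t₂₂ :=
      mul_right_cancel₀ hN₂c key
    exact mul_right_cancel₀ ht' k1
  refine ⟨by rw [h11, Complex.conj_conj], h21, ?_⟩
  intro hNN
  have hNNc : (N₁ : ℂ) = (N₂ : ℂ) := by exact_mod_cast hNN
  have h2c' : (starRingEnd ℂ) t₁₂ * t₁₂ + (starRingEnd ℂ) t₂₂ * t₂₂ = 1 := by
    apply mul_right_cancel₀ hN₂c
    linear_combination -h2c - (starRingEnd ℂ) t₁₂ * t₁₂ * hNNc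
  have h21' : t₂₁ = -(starRingEnd ℂ) t₁₂ := by
    rw [h21, hNNc, div_self hN₂c]; ring
  ext i j
  fin_cases i <;> fin_cases j <;>
    simp [Matrix.mul_apply, Fin.sum_univ_two, Matrix.conjTranspose_apply, Matrix.one_apply,
      h21', h11, map_neg]
  · linear_combination h2c'
  · ring
  · ring
  · linear_combination h2c'
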